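/- arXiv:1806.09366 — 2 statements merged into one kernel-verified Lean document; each statement's English description precedes it below -/
import Mathlib

section
/- Let X = W ⊕_a Z be the absolute sum of real Banach spaces W and Z with respect to an absolute norm N which is of type 1 or of type ∞ (so W is an absolute summand of X of type 1 or ∞). If W ⊕_a Z has the weak BPBp-nu for compact operators, then W has the weak BPBp-nu for compact operators. -/
open Filter Topology

/-- `N` is an absolute norm on `ℝ²`: a norm with `N(1,0)=N(0,1)=1` and
`N(s,t)=N(|s|,|t|)`. -/
structure IsAbsoluteNorm (N : ℝ → ℝ → ℝ) : Prop where
  nonneg : ∀ s t : ℝ, 0 ≤ N s t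
  eq_zero_iff : ∀ s t : ℝ, N s t = 0 ↔ s = 0 ∧ t = 0
  triangle : ∀ s₁ t₁ s₂ t₂ : ℝ, N (s₁ + s₂) (t₁ + t₂) ≤ N s₁ t₁ + N s₂ t₂
  smul : ∀ c s t : ℝ, N (c * s) (c * t) = |c| * N s t
  one_zero : N 1 0 = 1
  zero_one : N 0 1 = 1
  abs_eq : ∀ s t : ℝ, N s t = N |s| |t|

/-- An absolute norm is of type 1 if `|x| + K|y| ≤ N(x,y)` for some `K > 0`. -/
def AbsNormTypeOne (N : ℝ → ℝ → ℝ) : Prop :=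
  ∃ K : ℝ, 0 < K ∧ ∀ x y : ℝ, |x| + K * |y| ≤ N x y

/-- An absolute norm is of type ∞ if `N(1,b₀) = 1` for some `b₀ > 0`. -/
def AbsNormTypeInfty (N : ℝ → ℝ → ℝ) : Prop :=
  ∃ b₀ : ℝ, 0 < b₀ ∧ N 1 b₀ = 1

/-- The numerical radius of a bounded linear operator on `X`:
`v(T) = sup {|x*(T x)| : ‖x‖ = ‖x*‖ = 1, x*(x) = 1}`. -/
noncomputable def NumRadius {X : Type*} [NormedAddCommGroup X] [NormedSpace ℝ X]
    (T : X →L[ℝ] X) : ℝ :=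
  sSup {r : ℝ | ∃ (x : X) (f : X →L[ℝ] ℝ),
    ‖x‖ = 1 ∧ ‖f‖ = 1 ∧ f x = 1 ∧ r = |f (T x)|}

/-- `X` has the weak Bishop–Phelps–Bollobás property for numerical radius for
compact operators. -/
def HasWeakBPBnuCompact (X : Type*) [NormedAddCommGroup X] [NormedSpace ℝ X] : Prop :=
  ∀ ε : ℝ, 0 < ε → ∃ η : ℝ, 0 < η ∧
    ∀ (T : X →L[ℝ] X) (x : X) (f : X →L[ℝ] ℝ), IsCompactOperator (⇑T) →
      NumRadius T = 1 → ‖x‖ = 1 → ‖f‖ = 1 → f x = 1 → 1 - η < |f (T x)| →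
      ∃ (S : X →L[ℝ] X) (x₀ : X) (f₀ : X →L[ℝ] ℝ), IsCompactOperator (⇑S) ∧
        ‖x₀‖ = 1 ∧ ‖f₀‖ = 1 ∧ f₀ x₀ = 1 ∧
        |f₀ (S x₀)| = NumRadius S ∧ ‖f₀ - f‖ < ε ∧ ‖x₀ - x‖ < ε ∧ ‖S - T‖ < ε

namespace IsAbsoluteNorm
variable {N : ℝ → ℝ → ℝ} (hN : IsAbsoluteNorm N)
include hN

lemma left_zero (s : ℝ) : N s 0 = |s| := by
  have := hN.smul s 1 0
  simpa [hN.one_zero] using this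

lemma zero_right (t : ℝ) : N 0 t = |t| := by
  have := hN.smul t 0 1
  simpa [hN.zero_one] using this

lemma neg_right (s t : ℝ) : N s (-t) = N s t := by
  rw [hN.abs_eq s (-t), abs_neg, ← hN.abs_eq]

lemma neg_left (s t : ℝ) : N (-s) t = N s t := by
  rw [hN.abs_eq (-s) t, abs_neg, ← hN.abs_eq]

lemma abs_left_le (s t : ℝ) : |s| ≤ N s t := by
  have h2 : N (s + s) (t + -t) ≤ N s t + N s (-t) := hN.triangle s t s (-t)
  rw [hN.neg_right, add_neg_cancel] at h2
  have h3 : N s 0 + N s 0 = N (s + s) 0 := by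
    have := hN.smul 2 s 0
    rw [abs_of_pos (by norm_num : (0:ℝ) < 2)] at this
    simpa [two_mul] using this.symm
  rw [← h3, hN.left_zero] at h2
  linarith

lemma abs_right_le (s t : ℝ) : |t| ≤ N s t := by
  have h2 : N (s + -s) (t + t) ≤ N s t + N (-s) t := hN.triangle s t (-s) t
  rw [hN.neg_left, add_neg_cancel] at h2
  have h3 : N 0 t + N 0 t = N 0 (t + t) := by
    have := hN.smul 2 0 t
    rw [abs_of_pos (by norm_num : (0:ℝ) < 2)] at this
    simpa [two_mul] using this.symm
  rw [← h3, hN.zero_right] at h2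
  linarith

lemma mono_left {s s' : ℝ} (t : ℝ) (hs : 0 ≤ s) (hss : s ≤ s') : N s t ≤ N s' t := by
  rcases eq_or_lt_of_le (hs.trans hss) with h0 | h0
  · have : s = 0 := le_antisymm (hss.trans h0.symm.le) hs
    rw [this, ← h0]
  · set c := s / s' with hc
    have hc0 : 0 ≤ c := div_nonneg hs h0.le
    have hc1 : c ≤ 1 := (div_le_one h0).2 hss
    have hcs : c * s' = s := div_mul_cancel₀ s h0.ne'
    have key : N (c * s' + (1 - c) * 0) (c * t + (1 - c) * t) ≤
        N (c * s') (c * t) + N ((1 - c) * 0) ((1 - c) * t) := hN.triangle _ _ _ _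
    rw [hN.smul c s' t, hN.smul (1 - c) 0 t, abs_of_nonneg hc0,
      abs_of_nonneg (by linarith : (0:ℝ) ≤ 1 - c)] at key
    have hzt : N 0 t = |t| := hN.zero_right t
    have habs : |t| ≤ N s' t := hN.abs_right_le s' t
    have : N s t ≤ c * N s' t + (1 - c) * |t| := by
      have e1 : c * s' + (1 - c) * 0 = s := by rw [hcs]; ring
      have e2 : c * t + (1 - c) * t = t := by ring
      rw [e1, e2, hzt] at key; exact key
    nlinarith

lemma mono_right (s : ℝ) {t t' : ℝ} (ht : 0 ≤ t) (htt : t ≤ t') : N s t ≤ N s t' := by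
  rcases eq_or_lt_of_le (ht.trans htt) with h0 | h0
  · have : t = 0 := le_antisymm (htt.trans h0.symm.le) ht
    rw [this, ← h0]
  · set c := t / t' with hc
    have hc0 : 0 ≤ c := div_nonneg ht h0.le
    have hc1 : c ≤ 1 := (div_le_one h0).2 htt
    have hcs : c * t' = t := div_mul_cancel₀ t h0.ne'
    have key : N (c * s + (1 - c) * s) (c * t' + (1 - c) * 0) ≤
        N (c * s) (c * t') + N ((1 - c) * s) ((1 - c) * 0) := hN.triangle _ _ _ _
    rw [hN.smul c s t', hN.smul (1 - c) s 0, abs_of_nonneg hc0,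
      abs_of_nonneg (by linarith : (0:ℝ) ≤ 1 - c)] at key
    have hzt : N s 0 = |s| := hN.left_zero s
    have habs : |s| ≤ N s t' := hN.abs_left_le s t'
    have : N s t ≤ c * N s t' + (1 - c) * |s| := by
      have e1 : c * s + (1 - c) * s = s := by ring
      have e2 : c * t' + (1 - c) * 0 = t := by rw [hcs]; ring
      rw [e1, e2, hzt] at key; exact key
    nlinarith

lemma mono {s s' t t' : ℝ} (hs : 0 ≤ s) (hss : s ≤ s') (ht : 0 ≤ t) (htt : t ≤ t') :
    N s t ≤ N s' t' :=
  (hN.mono_left t hs hss).trans (hN.mono_right s' ht htt)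

end IsAbsoluteNorm

section NumRadiusLemmas

variable {Y : Type*} [NormedAddCommGroup Y] [NormedSpace ℝ Y]

lemma numRadius_bddAbove (T : Y →L[ℝ] Y) :
    BddAbove {r : ℝ | ∃ (x : Y) (f : Y →L[ℝ] ℝ),
      ‖x‖ = 1 ∧ ‖f‖ = 1 ∧ f x = 1 ∧ r = |f (T x)|} := by
  refine ⟨‖T‖, ?_⟩
  rintro r ⟨x, f, hx, hf, hfx, rfl⟩
  calc |f (T x)| ≤ ‖f‖ * ‖T x‖ := f.le_opNorm _
    _ ≤ 1 * (‖T‖ * ‖x‖) := by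
        rw [hf, one_mul, one_mul]; exact T.le_opNorm x
    _ = ‖T‖ := by rw [hx]; ring

lemma le_numRadius (T : Y →L[ℝ] Y) {x : Y} {f : Y →L[ℝ] ℝ}
    (hx : ‖x‖ = 1) (hf : ‖f‖ = 1) (hfx : f x = 1) : |f (T x)| ≤ NumRadius T :=
  le_csSup (numRadius_bddAbove T) ⟨x, f, hx, hf, hfx, rfl⟩

lemma numRadius_le (T : Y →L[ℝ] Y) {c : ℝ} (hc : 0 ≤ c)
    (hb : ∀ (x : Y) (f : Y →L[ℝ] ℝ), ‖x‖ = 1 → ‖f‖ = 1 → f x = 1 → |f (T x)| ≤ c) :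
    NumRadius T ≤ c := by
  apply Real.sSup_le _ hc
  rintro r ⟨x, f, hx, hf, hfx, rfl⟩
  exact hb x f hx hf hfx

lemma isCompactOperator_clm_real {c : Y →L[ℝ] ℝ} : IsCompactOperator ⇑c := by
  refine ⟨Set.Icc (-‖c‖) ‖c‖, isCompact_Icc, ?_⟩
  refine Filter.mem_of_superset (Metric.closedBall_mem_nhds 0 one_pos) ?_
  intro y hy
  simp only [Metric.mem_closedBall, dist_zero_right] at hy
  have h1 : |c y| ≤ ‖c‖ := by
    calc |c y| ≤ ‖c‖ * ‖y‖ := c.le_opNorm y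
      _ ≤ ‖c‖ * 1 := mul_le_mul_of_nonneg_left hy (norm_nonneg _)
      _ = ‖c‖ := mul_one _
  exact Set.mem_preimage.2 (abs_le.1 h1 |>.imp id id |> fun h => ⟨h.1, h.2⟩)

end NumRadiusLemmas

section AuxWBPB

variable {W Z X : Type*} [NormedAddCommGroup W] [NormedSpace ℝ W]
  [NormedAddCommGroup Z] [NormedSpace ℝ Z]
  [NormedAddCommGroup X] [NormedSpace ℝ X]
  {N : ℝ → ℝ → ℝ}

noncomputable def iW (e : X ≃L[ℝ] W × Z) : W →L[ℝ] X :=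
  (e.symm : (W × Z) →L[ℝ] X).comp (ContinuousLinearMap.inl ℝ W Z)

noncomputable def iZ (e : X ≃L[ℝ] W × Z) : Z →L[ℝ] X :=
  (e.symm : (W × Z) →L[ℝ] X).comp (ContinuousLinearMap.inr ℝ W Z)

noncomputable def pW (e : X ≃L[ℝ] W × Z) : X →L[ℝ] W :=
  (ContinuousLinearMap.fst ℝ W Z).comp (e : X →L[ℝ] (W × Z))

noncomputable def pZ (e : X ≃L[ℝ] W × Z) : X →L[ℝ] Z :=
  (ContinuousLinearMap.snd ℝ W Z).comp (e : X →L[ℝ] (W × Z))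

lemma iW_app (e : X ≃L[ℝ] W × Z) : ∀ w : W, iW e w = e.symm (w, 0) := fun _ => rfl

lemma iZ_app (e : X ≃L[ℝ] W × Z) : ∀ z : Z, iZ e z = e.symm (0, z) := fun _ => rfl

lemma pW_app (e : X ≃L[ℝ] W × Z) : ∀ y : X, pW e y = (e y).1 := fun _ => rfl

lemma pZ_app (e : X ≃L[ℝ] W × Z) : ∀ y : X, pZ e y = (e y).2 := fun _ => rfl

lemma pW_iW (e : X ≃L[ℝ] W × Z) : ∀ w : W, pW e (iW e w) = w := by
  intro w
  rw [iW_app, pW_app]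
  simp

lemma pZ_iW (e : X ≃L[ℝ] W × Z) : ∀ w : W, pZ e (iW e w) = 0 := by
  intro w
  rw [iW_app, pZ_app]
  simp

lemma pW_iZ (e : X ≃L[ℝ] W × Z) : ∀ z : Z, pW e (iZ e z) = 0 := by
  intro z
  rw [iZ_app, pW_app]
  simp

lemma pZ_iZ (e : X ≃L[ℝ] W × Z) : ∀ z : Z, pZ e (iZ e z) = z := by
  intro z
  rw [iZ_app, pZ_app]
  simp

lemma pair_add (e : X ≃L[ℝ] W × Z) : ∀ (w : W) (z : Z), iW e w + iZ e z = e.symm (w, z) := by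
  intro w z
  rw [iW_app, iZ_app, ← map_add]
  norm_num

lemma decomp_eq (e : X ≃L[ℝ] W × Z) : ∀ y : X, iW e (pW e y) + iZ e (pZ e y) = y := by
  intro y
  rw [pair_add, pW_app, pZ_app]
  rw [show ((e y).1, (e y).2) = e y from rfl]
  exact e.symm_apply_apply y

lemma norm_symm (e : X ≃L[ℝ] W × Z) (he : ∀ x : X, ‖x‖ = N ‖(e x).1‖ ‖(e x).2‖) :
    ∀ (w : W) (z : Z), ‖e.symm (w, z)‖ = N ‖w‖ ‖z‖ := by
  intro w z
  have := he (e.symm (w, z))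
  simpa using this

lemma norm_iW (hN : IsAbsoluteNorm N) (e : X ≃L[ℝ] W × Z)
    (he : ∀ x : X, ‖x‖ = N ‖(e x).1‖ ‖(e x).2‖) : ∀ w : W, ‖iW e w‖ = ‖w‖ := by
  intro w
  rw [iW_app, norm_symm e he, norm_zero, hN.left_zero, abs_of_nonneg (norm_nonneg _)]

lemma norm_iZ (hN : IsAbsoluteNorm N) (e : X ≃L[ℝ] W × Z)
    (he : ∀ x : X, ‖x‖ = N ‖(e x).1‖ ‖(e x).2‖) : ∀ z : Z, ‖iZ e z‖ = ‖z‖ := by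
  intro z
  rw [iZ_app, norm_symm e he, norm_zero, hN.zero_right, abs_of_nonneg (norm_nonneg _)]

lemma norm_pW_le (hN : IsAbsoluteNorm N) (e : X ≃L[ℝ] W × Z)
    (he : ∀ x : X, ‖x‖ = N ‖(e x).1‖ ‖(e x).2‖) : ∀ y : X, ‖pW e y‖ ≤ ‖y‖ := by
  intro y
  rw [pW_app, he y]
  have := hN.abs_left_le ‖(e y).1‖ ‖(e y).2‖
  rwa [abs_of_nonneg (norm_nonneg _)] at this

lemma norm_pZ_le (hN : IsAbsoluteNorm N) (e : X ≃L[ℝ] W × Z)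
    (he : ∀ x : X, ‖x‖ = N ‖(e x).1‖ ‖(e x).2‖) : ∀ y : X, ‖pZ e y‖ ≤ ‖y‖ := by
  intro y
  rw [pZ_app, he y]
  have := hN.abs_right_le ‖(e y).1‖ ‖(e y).2‖
  rwa [abs_of_nonneg (norm_nonneg _)] at this

lemma norm_eq_N (e : X ≃L[ℝ] W × Z) (he : ∀ x : X, ‖x‖ = N ‖(e x).1‖ ‖(e x).2‖) :
    ∀ y : X, ‖y‖ = N ‖pW e y‖ ‖pZ e y‖ := by
  intro y
  rw [pW_app, pZ_app]
  exact he y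

set_option maxHeartbeats 1000000 in
lemma tilde_le (hN : IsAbsoluteNorm N) (e : X ≃L[ℝ] W × Z)
    (he : ∀ x : X, ‖x‖ = N ‖(e x).1‖ ‖(e x).2‖) :
    ∀ (T : W →L[ℝ] W), 0 ≤ NumRadius T →
      ∀ (u : X) (g : X →L[ℝ] ℝ), ‖u‖ = 1 → ‖g‖ = 1 → g u = 1 →
      |g ((iW e) (T ((pW e) u)))| ≤ NumRadius T := by
  have hIA : ∀ w : W, (iW e) w = e.symm (w, 0) := iW_app e
  have hIZA : ∀ z : Z, (iZ e) z = e.symm (0, z) := iZ_app e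
  have hPA : ∀ y : X, (pW e) y = (e y).1 := pW_app e
  have hPZA : ∀ y : X, (pZ e) y = (e y).2 := pZ_app e
  have hPI : ∀ w : W, (pW e) ((iW e) w) = w := pW_iW e
  have hPZI : ∀ w : W, (pZ e) ((iW e) w) = 0 := pZ_iW e
  have hPIZ : ∀ z : Z, (pW e) ((iZ e) z) = 0 := pW_iZ e
  have hPZIZ : ∀ z : Z, (pZ e) ((iZ e) z) = z := pZ_iZ e
  have hpair : ∀ (w : W) (z : Z), (iW e) w + (iZ e) z = e.symm (w, z) := pair_add e
  have hdecomp : ∀ y : X, (iW e) ((pW e) y) + (iZ e) ((pZ e) y) = y := decomp_eq e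
  have hnorm : ∀ (w : W) (z : Z), ‖e.symm (w, z)‖ = N ‖w‖ ‖z‖ := norm_symm e he
  have nI : ∀ w : W, ‖(iW e) w‖ = ‖w‖ := norm_iW hN e he
  have nIZ : ∀ z : Z, ‖(iZ e) z‖ = ‖z‖ := norm_iZ hN e he
  have nP : ∀ y : X, ‖(pW e) y‖ ≤ ‖y‖ := norm_pW_le hN e he
  have nPZ : ∀ y : X, ‖(pZ e) y‖ ≤ ‖y‖ := norm_pZ_le hN e he
  have hNy : ∀ y : X, ‖y‖ = N ‖(pW e) y‖ ‖(pZ e) y‖ := norm_eq_N e he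
  intro T hT u g hu hg hgu
  set u₁ := (pW e) u with hu₁
  set u₂ := (pZ e) u with hu₂
  set g₁ : W →L[ℝ] ℝ := g.comp (iW e) with hg₁
  set g₂ : Z →L[ℝ] ℝ := g.comp (iZ e) with hg₂
  have hsplit : ∀ (w : W) (z : Z), g (e.symm (w, z)) = g₁ w + g₂ z := by
    intro w z
    rw [← hpair, map_add]
    rfl
  have hgu' : g₁ u₁ + g₂ u₂ = 1 := by
    rw [← hsplit, hu₁, hu₂, hPA, hPZA]
    rw [show ((e u).1, (e u).2) = e u from rfl, e.symm_apply_apply, hgu]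
  have hNu : N ‖u₁‖ ‖u₂‖ = 1 := by rw [← hNy, hu]
  have claim : ∀ w : W, ‖w‖ ≤ ‖u₁‖ → g₁ w ≤ g₁ u₁ := by
    intro w hw
    have h1 : g (e.symm (w, u₂)) ≤ 1 := by
      calc g (e.symm (w, u₂)) ≤ |g (e.symm (w, u₂))| := le_abs_self _
        _ ≤ ‖g‖ * ‖e.symm (w, u₂)‖ := g.le_opNorm _
        _ = N ‖w‖ ‖u₂‖ := by rw [hg, one_mul, hnorm]
        _ ≤ N ‖u₁‖ ‖u₂‖ := hN.mono_left _ (norm_nonneg _) hw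
        _ = 1 := hNu
    rw [hsplit] at h1
    linarith
  have claim2 : ∀ z : Z, ‖z‖ ≤ ‖u₂‖ → g₂ z ≤ g₂ u₂ := by
    intro z hz
    have h1 : g (e.symm (u₁, z)) ≤ 1 := by
      calc g (e.symm (u₁, z)) ≤ |g (e.symm (u₁, z))| := le_abs_self _
        _ ≤ ‖g‖ * ‖e.symm (u₁, z)‖ := g.le_opNorm _
        _ = N ‖u₁‖ ‖z‖ := by rw [hg, one_mul, hnorm]
        _ ≤ N ‖u₁‖ ‖u₂‖ := hN.mono_right _ (norm_nonneg _) hz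
        _ = 1 := hNu
    rw [hsplit] at h1
    linarith
  have hg2nn : 0 ≤ g₂ u₂ := by
    have := claim2 0 (by simp)
    simpa using this
  have hg1u1le : g₁ u₁ ≤ 1 := by linarith
  have hg1u1nn : 0 ≤ g₁ u₁ := by
    have := claim 0 (by simp)
    simpa using this
  have hval : g ((iW e) (T ((pW e) u))) = g₁ (T u₁) := rfl
  rw [hval]
  by_cases hu1 : u₁ = 0
  · rw [hu1]
    simp only [map_zero, abs_zero]
    exact hT
  · have hu1n : 0 < ‖u₁‖ := norm_pos_iff.2 hu1
    have hbound : ∀ w : W, |g₁ w| * ‖u₁‖ ≤ g₁ u₁ * ‖w‖ := by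
      intro w
      by_cases hw : w = 0
      · simp [hw, mul_nonneg hg1u1nn (norm_nonneg (0:W))]
      · have hwn : 0 < ‖w‖ := norm_pos_iff.2 hw
        have c1 := claim ((‖u₁‖ / ‖w‖) • w)
          (by rw [norm_smul, Real.norm_eq_abs, abs_of_pos (div_pos hu1n hwn),
            div_mul_cancel₀ _ hwn.ne'])
        have c2 := claim ((-(‖u₁‖ / ‖w‖)) • w)
          (by rw [norm_smul, Real.norm_eq_abs, abs_neg, abs_of_pos (div_pos hu1n hwn),
            div_mul_cancel₀ _ hwn.ne'])
        rw [map_smul, smul_eq_mul] at c1 c2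
        have habs : |g₁ w| * (‖u₁‖ / ‖w‖) ≤ g₁ u₁ := by
          rcases abs_cases (g₁ w) with ⟨hh, _⟩ | ⟨hh, _⟩
          · rw [hh]; rw [mul_comm] at c1; exact c1
          · rw [hh]
            rw [mul_comm] at c2
            simpa [neg_mul, mul_neg] using c2
        calc |g₁ w| * ‖u₁‖ = (|g₁ w| * (‖u₁‖ / ‖w‖)) * ‖w‖ := by
              field_simp
          _ ≤ g₁ u₁ * ‖w‖ := mul_le_mul_of_nonneg_right habs hwn.le
    have hg1norm : ‖g₁‖ ≤ g₁ u₁ / ‖u₁‖ := by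
      apply ContinuousLinearMap.opNorm_le_bound _ (div_nonneg hg1u1nn hu1n.le)
      intro w
      rw [Real.norm_eq_abs, div_mul_eq_mul_div, le_div_iff₀ hu1n]
      exact hbound w
    by_cases hg1z : g₁ u₁ = 0
    · have h0 : ‖g₁‖ ≤ 0 := by
        refine hg1norm.trans ?_
        rw [hg1z]
        simp
      have hg10 : ‖g₁‖ = 0 := le_antisymm h0 (norm_nonneg _)
      calc |g₁ (T u₁)| ≤ ‖g₁‖ * ‖T u₁‖ := g₁.le_opNorm _
        _ = 0 := by rw [hg10, zero_mul]
        _ ≤ NumRadius T := hT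
    · have hg1pos : 0 < g₁ u₁ := lt_of_le_of_ne hg1u1nn (Ne.symm hg1z)
      have hg1npos : 0 < ‖g₁‖ := by
        rcases le_or_gt ‖g₁‖ 0 with hle | hlt
        · exfalso
          have h1 : g₁ u₁ ≤ |g₁ u₁| := le_abs_self _
          have h2 : |g₁ u₁| ≤ ‖g₁‖ * ‖u₁‖ := g₁.le_opNorm _
          nlinarith
        · exact hlt
      have heq : ‖g₁‖ * ‖u₁‖ = g₁ u₁ := by
        apply le_antisymm
        · rw [← le_div_iff₀ hu1n]
          exact hg1norm
        · calc g₁ u₁ ≤ |g₁ u₁| := le_abs_self _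
            _ ≤ ‖g₁‖ * ‖u₁‖ := g₁.le_opNorm _
      set x' := (‖u₁‖⁻¹ : ℝ) • u₁ with hx'
      set f' := (‖g₁‖⁻¹ : ℝ) • g₁ with hf'
      have hx'n : ‖x'‖ = 1 := by
        rw [hx', norm_smul, Real.norm_eq_abs, abs_of_pos (inv_pos.2 hu1n),
          inv_mul_cancel₀ hu1n.ne']
      have hf'n : ‖f'‖ = 1 := by
        rw [hf', norm_smul (‖g₁‖⁻¹) g₁, Real.norm_eq_abs, abs_of_pos (inv_pos.2 hg1npos),
          inv_mul_cancel₀ hg1npos.ne']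
      have hf'x' : f' x' = 1 := by
        rw [hf', hx']
        simp only [ContinuousLinearMap.smul_apply, map_smul, smul_eq_mul]
        rw [← heq]
        field_simp
      have hmem : |f' (T x')| ≤ NumRadius T := le_numRadius T hx'n hf'n hf'x'
      have hvalue : |f' (T x')| = ‖g₁‖⁻¹ * ‖u₁‖⁻¹ * |g₁ (T u₁)| := by
        rw [hf', hx']
        simp only [ContinuousLinearMap.smul_apply, map_smul, smul_eq_mul]
        rw [abs_mul, abs_mul, abs_of_pos (inv_pos.2 hg1npos),
          abs_of_pos (inv_pos.2 hu1n)]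
        ring
      rw [hvalue] at hmem
      have hkey : |g₁ (T u₁)| = ‖g₁‖ * ‖u₁‖ * (‖g₁‖⁻¹ * ‖u₁‖⁻¹ * |g₁ (T u₁)|) := by
        field_simp
      rw [hkey]
      calc ‖g₁‖ * ‖u₁‖ * (‖g₁‖⁻¹ * ‖u₁‖⁻¹ * |g₁ (T u₁)|)
          ≤ ‖g₁‖ * ‖u₁‖ * NumRadius T :=
            mul_le_mul_of_nonneg_left hmem (mul_nonneg hg1npos.le hu1n.le)
        _ = g₁ u₁ * NumRadius T := by rw [heq]
        _ ≤ 1 * NumRadius T := mul_le_mul_of_nonneg_right hg1u1le hT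
        _ = NumRadius T := one_mul _

set_option maxHeartbeats 1000000 in
lemma tilde_eq (hN : IsAbsoluteNorm N) (e : X ≃L[ℝ] W × Z)
    (he : ∀ x : X, ‖x‖ = N ‖(e x).1‖ ‖(e x).2‖) :
    ∀ T : W →L[ℝ] W, NumRadius T = 1 →
      NumRadius ((iW e).comp (T.comp (pW e))) = 1 := by
  have hIA : ∀ w : W, (iW e) w = e.symm (w, 0) := iW_app e
  have hIZA : ∀ z : Z, (iZ e) z = e.symm (0, z) := iZ_app e
  have hPA : ∀ y : X, (pW e) y = (e y).1 := pW_app e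
  have hPZA : ∀ y : X, (pZ e) y = (e y).2 := pZ_app e
  have hPI : ∀ w : W, (pW e) ((iW e) w) = w := pW_iW e
  have hPZI : ∀ w : W, (pZ e) ((iW e) w) = 0 := pZ_iW e
  have hPIZ : ∀ z : Z, (pW e) ((iZ e) z) = 0 := pW_iZ e
  have hPZIZ : ∀ z : Z, (pZ e) ((iZ e) z) = z := pZ_iZ e
  have hpair : ∀ (w : W) (z : Z), (iW e) w + (iZ e) z = e.symm (w, z) := pair_add e
  have hdecomp : ∀ y : X, (iW e) ((pW e) y) + (iZ e) ((pZ e) y) = y := decomp_eq e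
  have hnorm : ∀ (w : W) (z : Z), ‖e.symm (w, z)‖ = N ‖w‖ ‖z‖ := norm_symm e he
  have nI : ∀ w : W, ‖(iW e) w‖ = ‖w‖ := norm_iW hN e he
  have nIZ : ∀ z : Z, ‖(iZ e) z‖ = ‖z‖ := norm_iZ hN e he
  have nP : ∀ y : X, ‖(pW e) y‖ ≤ ‖y‖ := norm_pW_le hN e he
  have nPZ : ∀ y : X, ‖(pZ e) y‖ ≤ ‖y‖ := norm_pZ_le hN e he
  have hNy : ∀ y : X, ‖y‖ = N ‖(pW e) y‖ ‖(pZ e) y‖ := norm_eq_N e he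
  have tilde_le := tilde_le hN e he
  intro T hT
  apply le_antisymm
  · apply numRadius_le _ zero_le_one
    intro u g hu hg hgu
    have hle := tilde_le T (by rw [hT]; exact zero_le_one) u g hu hg hgu
    rw [hT] at hle
    exact hle
  · rw [← hT]
    unfold NumRadius
    apply csSup_le_csSup (numRadius_bddAbove _)
    · by_contra hcon
      rw [Set.not_nonempty_iff_eq_empty] at hcon
      rw [NumRadius, hcon, Real.sSup_empty] at hT
      norm_num at hT
    · rintro r ⟨x, f, hx, hf, hfx, rfl⟩
      refine ⟨(iW e) x, f.comp (pW e), ?_, ?_, ?_, ?_⟩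
      · rw [nI]; exact hx
      · apply le_antisymm
        · apply ContinuousLinearMap.opNorm_le_bound _ zero_le_one
          intro y
          calc ‖(f.comp (pW e)) y‖ = |f ((pW e) y)| := rfl
            _ ≤ ‖f‖ * ‖(pW e) y‖ := f.le_opNorm _
            _ ≤ 1 * ‖y‖ := by
                rw [hf, one_mul, one_mul]; exact nP y
        · have h1 : (f.comp (pW e)) ((iW e) x) = 1 := by
            show f ((pW e) ((iW e) x)) = 1
            rw [hPI]; exact hfx
          have h2 : |(f.comp (pW e)) ((iW e) x)| ≤ ‖f.comp (pW e)‖ * ‖(iW e) x‖ := (f.comp (pW e)).le_opNorm _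
          rw [h1, nI, hx, mul_one] at h2
          simpa using h2
      · show f ((pW e) ((iW e) x)) = 1
        rw [hPI]; exact hfx
      · show |f (T x)| = |(f.comp (pW e)) (((iW e).comp (T.comp (pW e))) ((iW e) x))|
        have : (f.comp (pW e)) (((iW e).comp (T.comp (pW e))) ((iW e) x)) = f (T x) := by
          show f ((pW e) ((iW e) (T ((pW e) ((iW e) x))))) = f (T x)
          rw [hPI, hPI]
        rw [this]

set_option maxHeartbeats 1000000 in
lemma key_lemma (hN : IsAbsoluteNorm N) (e : X ≃L[ℝ] W × Z)
    (he : ∀ x : X, ‖x‖ = N ‖(e x).1‖ ‖(e x).2‖)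
    (h : HasWeakBPBnuCompact X) :
    ∀ ε' : ℝ, 0 < ε' → ∃ η : ℝ, 0 < η ∧
      ∀ (T : W →L[ℝ] W) (x : W) (f : W →L[ℝ] ℝ), IsCompactOperator ⇑T →
        NumRadius T = 1 → ‖x‖ = 1 → ‖f‖ = 1 → f x = 1 → 1 - η < |f (T x)| →
        ∃ (S : X →L[ℝ] X) (w₀ : W) (z₀ : Z) (g₀ : X →L[ℝ] ℝ),
          IsCompactOperator ⇑S ∧
          ‖S - (iW e).comp (T.comp (pW e))‖ < ε' ∧
          ‖g₀‖ = 1 ∧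
          ‖w₀ - x‖ < ε' ∧ ‖z₀‖ < ε' ∧
          ‖g₀.comp (iW e) - f‖ < ε' ∧ ‖g₀.comp (iZ e)‖ < ε' ∧
          ‖w₀‖ ≤ 1 ∧ N ‖w₀‖ ‖z₀‖ = 1 ∧
          g₀ (e.symm (w₀, z₀)) = 1 ∧
          |g₀ (S (e.symm (w₀, z₀)))| = NumRadius S := by
  have hIA : ∀ w : W, (iW e) w = e.symm (w, 0) := iW_app e
  have hIZA : ∀ z : Z, (iZ e) z = e.symm (0, z) := iZ_app e
  have hPA : ∀ y : X, (pW e) y = (e y).1 := pW_app e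
  have hPZA : ∀ y : X, (pZ e) y = (e y).2 := pZ_app e
  have hPI : ∀ w : W, (pW e) ((iW e) w) = w := pW_iW e
  have hPZI : ∀ w : W, (pZ e) ((iW e) w) = 0 := pZ_iW e
  have hPIZ : ∀ z : Z, (pW e) ((iZ e) z) = 0 := pW_iZ e
  have hPZIZ : ∀ z : Z, (pZ e) ((iZ e) z) = z := pZ_iZ e
  have hpair : ∀ (w : W) (z : Z), (iW e) w + (iZ e) z = e.symm (w, z) := pair_add e
  have hdecomp : ∀ y : X, (iW e) ((pW e) y) + (iZ e) ((pZ e) y) = y := decomp_eq e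
  have hnorm : ∀ (w : W) (z : Z), ‖e.symm (w, z)‖ = N ‖w‖ ‖z‖ := norm_symm e he
  have nI : ∀ w : W, ‖(iW e) w‖ = ‖w‖ := norm_iW hN e he
  have nIZ : ∀ z : Z, ‖(iZ e) z‖ = ‖z‖ := norm_iZ hN e he
  have nP : ∀ y : X, ‖(pW e) y‖ ≤ ‖y‖ := norm_pW_le hN e he
  have nPZ : ∀ y : X, ‖(pZ e) y‖ ≤ ‖y‖ := norm_pZ_le hN e he
  have hNy : ∀ y : X, ‖y‖ = N ‖(pW e) y‖ ‖(pZ e) y‖ := norm_eq_N e he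
  have tilde_eq := tilde_eq hN e he
  intro ε' hε'
  obtain ⟨η, hη, hmain⟩ := h ε' hε'
  refine ⟨η, hη, ?_⟩
  intro T x f hTc hvT hx hf hfx hclose
  have hT'c : IsCompactOperator ⇑((iW e).comp (T.comp (pW e))) := by
    have h1 : IsCompactOperator (⇑T ∘ ⇑(pW e)) := hTc.comp_clm (pW e)
    have h2 : IsCompactOperator (⇑(iW e) ∘ (⇑T ∘ ⇑(pW e))) := h1.clm_comp (iW e)
    have h3 : ⇑((iW e).comp (T.comp (pW e))) = ⇑(iW e) ∘ (⇑T ∘ ⇑(pW e)) := by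
      funext y; rfl
    rw [h3]; exact h2
  have hvT' := tilde_eq T hvT
  have hxn : ‖(iW e) x‖ = 1 := by rw [nI]; exact hx
  have hf'n : ‖f.comp (pW e)‖ = 1 := by
    apply le_antisymm
    · apply ContinuousLinearMap.opNorm_le_bound _ zero_le_one
      intro y
      calc ‖(f.comp (pW e)) y‖ = |f ((pW e) y)| := rfl
        _ ≤ ‖f‖ * ‖(pW e) y‖ := f.le_opNorm _
        _ ≤ 1 * ‖y‖ := by rw [hf, one_mul, one_mul]; exact nP y
    · have h1 : (f.comp (pW e)) ((iW e) x) = 1 := by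
        show f ((pW e) ((iW e) x)) = 1
        rw [hPI]; exact hfx
      have h2 : |(f.comp (pW e)) ((iW e) x)| ≤ ‖f.comp (pW e)‖ * ‖(iW e) x‖ := (f.comp (pW e)).le_opNorm _
      rw [h1, hxn, mul_one] at h2
      simpa using h2
  have hf'x : (f.comp (pW e)) ((iW e) x) = 1 := by
    show f ((pW e) ((iW e) x)) = 1
    rw [hPI]; exact hfx
  have hval : (f.comp (pW e)) (((iW e).comp (T.comp (pW e))) ((iW e) x)) = f (T x) := by
    show f ((pW e) ((iW e) (T ((pW e) ((iW e) x))))) = f (T x)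
    rw [hPI, hPI]
  obtain ⟨S, x₀, g₀, hSc, hx₀, hg₀, hg₀x₀, hattain, hg₀f, hx₀x, hST⟩ :=
    hmain ((iW e).comp (T.comp (pW e))) ((iW e) x) (f.comp (pW e)) hT'c hvT' hxn hf'n hf'x
      (by rw [hval]; exact hclose)
  have hx₀dec : e.symm ((pW e) x₀, (pZ e) x₀) = x₀ := by
    rw [← hpair]; exact hdecomp x₀
  refine ⟨S, (pW e) x₀, (pZ e) x₀, g₀, hSc, hST, hg₀, ?_, ?_, ?_, ?_, ?_, ?_, ?_, ?_⟩
  · have h1 : (pW e) x₀ - x = (pW e) (x₀ - (iW e) x) := by rw [map_sub, hPI]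
    rw [h1]
    exact lt_of_le_of_lt (nP _) hx₀x
  · have h1 : (pZ e) x₀ = (pZ e) (x₀ - (iW e) x) := by rw [map_sub, hPZI, sub_zero]
    rw [h1]
    exact lt_of_le_of_lt (nPZ _) hx₀x
  · have hb : ‖g₀.comp (iW e) - f‖ ≤ ‖g₀ - f.comp (pW e)‖ := by
      apply ContinuousLinearMap.opNorm_le_bound _ (norm_nonneg _)
      intro w
      have h1 : (g₀.comp (iW e) - f) w = (g₀ - f.comp (pW e)) ((iW e) w) := by
        show g₀ ((iW e) w) - f w = g₀ ((iW e) w) - f ((pW e) ((iW e) w))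
        rw [hPI]
      rw [h1]
      calc ‖(g₀ - f.comp (pW e)) ((iW e) w)‖ ≤ ‖g₀ - f.comp (pW e)‖ * ‖(iW e) w‖ :=
            (g₀ - f.comp (pW e)).le_opNorm _
        _ = ‖g₀ - f.comp (pW e)‖ * ‖w‖ := by rw [nI]
    exact lt_of_le_of_lt hb hg₀f
  · have hb : ‖g₀.comp (iZ e)‖ ≤ ‖g₀ - f.comp (pW e)‖ := by
      apply ContinuousLinearMap.opNorm_le_bound _ (norm_nonneg _)
      intro z
      have h1 : (g₀.comp (iZ e)) z = (g₀ - f.comp (pW e)) ((iZ e) z) := by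
        show g₀ ((iZ e) z) = g₀ ((iZ e) z) - f ((pW e) ((iZ e) z))
        rw [hPIZ, map_zero, sub_zero]
      rw [h1]
      calc ‖(g₀ - f.comp (pW e)) ((iZ e) z)‖ ≤ ‖g₀ - f.comp (pW e)‖ * ‖(iZ e) z‖ :=
            (g₀ - f.comp (pW e)).le_opNorm _
        _ = ‖g₀ - f.comp (pW e)‖ * ‖z‖ := by rw [nIZ]
    exact lt_of_le_of_lt hb hg₀f
  · calc ‖(pW e) x₀‖ ≤ ‖x₀‖ := nP x₀
      _ = 1 := hx₀
  · rw [← hNy, hx₀]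
  · rw [hx₀dec]; exact hg₀x₀
  · rw [hx₀dec]; exact hattain

lemma g0_iW_norm (hN : IsAbsoluteNorm N) (e : X ≃L[ℝ] W × Z)
    (he : ∀ x : X, ‖x‖ = N ‖(e x).1‖ ‖(e x).2‖) :
    ∀ g₀ : X →L[ℝ] ℝ, ‖g₀‖ = 1 → ‖g₀.comp (iW e)‖ ≤ 1 := by
  have nI : ∀ w : W, ‖(iW e) w‖ = ‖w‖ := norm_iW hN e he
  intro g₀ hg₀
  apply ContinuousLinearMap.opNorm_le_bound _ zero_le_one
  intro w
  calc ‖(g₀.comp (iW e)) w‖ = |g₀ ((iW e) w)| := rfl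
    _ ≤ ‖g₀‖ * ‖(iW e) w‖ := g₀.le_opNorm _
    _ = 1 * ‖w‖ := by rw [hg₀, nI]

set_option maxHeartbeats 2000000 in
lemma branch_one (hN : IsAbsoluteNorm N) (e : X ≃L[ℝ] W × Z)
    (he : ∀ x : X, ‖x‖ = N ‖(e x).1‖ ‖(e x).2‖)
    (h : HasWeakBPBnuCompact X)
    (K : ℝ) (hK : 0 < K) (hKle : ∀ x y : ℝ, |x| + K * |y| ≤ N x y) :
    HasWeakBPBnuCompact W := by
  have hIA : ∀ w : W, (iW e) w = e.symm (w, 0) := iW_app e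
  have hIZA : ∀ z : Z, (iZ e) z = e.symm (0, z) := iZ_app e
  have hPA : ∀ y : X, (pW e) y = (e y).1 := pW_app e
  have hPZA : ∀ y : X, (pZ e) y = (e y).2 := pZ_app e
  have hPI : ∀ w : W, (pW e) ((iW e) w) = w := pW_iW e
  have hPZI : ∀ w : W, (pZ e) ((iW e) w) = 0 := pZ_iW e
  have hPIZ : ∀ z : Z, (pW e) ((iZ e) z) = 0 := pW_iZ e
  have hPZIZ : ∀ z : Z, (pZ e) ((iZ e) z) = z := pZ_iZ e
  have hpair : ∀ (w : W) (z : Z), (iW e) w + (iZ e) z = e.symm (w, z) := pair_add e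
  have hdecomp : ∀ y : X, (iW e) ((pW e) y) + (iZ e) ((pZ e) y) = y := decomp_eq e
  have hnorm : ∀ (w : W) (z : Z), ‖e.symm (w, z)‖ = N ‖w‖ ‖z‖ := norm_symm e he
  have nI : ∀ w : W, ‖(iW e) w‖ = ‖w‖ := norm_iW hN e he
  have nIZ : ∀ z : Z, ‖(iZ e) z‖ = ‖z‖ := norm_iZ hN e he
  have nP : ∀ y : X, ‖(pW e) y‖ ≤ ‖y‖ := norm_pW_le hN e he
  have nPZ : ∀ y : X, ‖(pZ e) y‖ ≤ ‖y‖ := norm_pZ_le hN e he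
  have hNy : ∀ y : X, ‖y‖ = N ‖(pW e) y‖ ‖(pZ e) y‖ := norm_eq_N e he
  have key := key_lemma hN e he h
  have g₀ι_norm := g0_iW_norm hN e he
  intro ε hε
  have hK1 : K ≤ 1 := by
    have := hKle 0 1
    rw [abs_zero, abs_one, hN.zero_one] at this
    linarith
  set ε' := min ε K / 2 with hε'def
  have hε'pos : 0 < ε' := by
    apply div_pos (lt_min hε hK)
    norm_num
  have hε'K : ε' < K := by
    rw [hε'def]
    have := min_le_right ε K
    linarith
  have hε'1 : ε' ≤ 1 := by
    rw [hε'def]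
    have := min_le_right ε K
    linarith
  have hε'ε : 2 * ε' ≤ ε := by
    rw [hε'def]
    have := min_le_left ε K
    linarith
  have hε'ltε : ε' < ε := by linarith
  obtain ⟨η, hη, hkey⟩ := key ε' hε'pos
  refine ⟨η, hη, ?_⟩
  intro T x f hTc hvT hx hf hfx hclose
  obtain ⟨S, w₀, z₀, g₀, hSc, hST, hg₀n, hw₀x, hz₀, hg₁f, hg₂n, hw₀n, hNw₀, hg₀1, hg₀att⟩ :=
    hkey T x f hTc hvT hx hf hfx hclose
  set g₁ := g₀.comp (iW e) with hg₁def
  set g₂ := g₀.comp (iZ e) with hg₂def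
  have hg₁norm : ‖g₁‖ ≤ 1 := g₀ι_norm g₀ hg₀n
  have hg₂norm : ‖g₂‖ ≤ ε' := hg₂n.le
  have hsum : g₁ w₀ + g₂ z₀ = 1 := by
    show g₀ ((iW e) w₀) + g₀ ((iZ e) z₀) = 1
    rw [← map_add, hpair]
    exact hg₀1
  have hz₀0 : z₀ = 0 := by
    by_contra hne
    have h1 : ‖w₀‖ + K * ‖z₀‖ ≤ 1 := by
      have h2 := hKle ‖w₀‖ ‖z₀‖
      rw [abs_of_nonneg (norm_nonneg _), abs_of_nonneg (norm_nonneg _), hNw₀] at h2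
      exact h2
    have ha : g₁ w₀ ≤ ‖w₀‖ := by
      calc g₁ w₀ ≤ |g₁ w₀| := le_abs_self _
        _ ≤ ‖g₁‖ * ‖w₀‖ := g₁.le_opNorm _
        _ ≤ 1 * ‖w₀‖ := mul_le_mul_of_nonneg_right hg₁norm (norm_nonneg _)
        _ = ‖w₀‖ := one_mul _
    have hb : g₂ z₀ ≤ ε' * ‖z₀‖ := by
      calc g₂ z₀ ≤ |g₂ z₀| := le_abs_self _
        _ ≤ ‖g₂‖ * ‖z₀‖ := g₂.le_opNorm _
        _ ≤ ε' * ‖z₀‖ := mul_le_mul_of_nonneg_right hg₂norm (norm_nonneg _)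
    have hzpos : 0 < ‖z₀‖ := norm_pos_iff.2 hne
    nlinarith
  have hg₁w₀ : g₁ w₀ = 1 := by
    rw [hz₀0, map_zero, add_zero] at hsum
    exact hsum
  have hw₀1 : ‖w₀‖ = 1 := by
    refine le_antisymm hw₀n ?_
    have h1 : (1:ℝ) ≤ ‖g₁‖ * ‖w₀‖ := by
      calc (1:ℝ) = g₁ w₀ := hg₁w₀.symm
        _ ≤ |g₁ w₀| := le_abs_self _
        _ ≤ ‖g₁‖ * ‖w₀‖ := g₁.le_opNorm _
    nlinarith [norm_nonneg w₀]
  have hg₁1 : ‖g₁‖ = 1 := by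
    refine le_antisymm hg₁norm ?_
    have h1 : (1:ℝ) ≤ ‖g₁‖ * ‖w₀‖ := by
      calc (1:ℝ) = g₁ w₀ := hg₁w₀.symm
        _ ≤ |g₁ w₀| := le_abs_self _
        _ ≤ ‖g₁‖ * ‖w₀‖ := g₁.le_opNorm _
    rw [hw₀1, mul_one] at h1
    exact h1
  have hx0i : e.symm (w₀, z₀) = (iW e) w₀ := by rw [hz₀0, hIA]
  rw [hx0i] at hg₀att
  -- the compact operator on W
  set c : W →L[ℝ] ℝ := g₂.comp ((pZ e).comp (S.comp (iW e))) with hcdef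
  set S₁ : W →L[ℝ] W := (pW e).comp (S.comp (iW e)) + c.smulRight w₀ with hS₁def
  have hS₁app : ∀ w, S₁ w = (pW e) (S ((iW e) w)) + g₂ ((pZ e) (S ((iW e) w))) • w₀ := fun w => rfl
  have hS₁c : IsCompactOperator ⇑S₁ := by
    have h1 : IsCompactOperator ⇑((pW e).comp (S.comp (iW e))) := by
      have h2 := (hSc.comp_clm (iW e)).clm_comp (pW e)
      have h3 : ⇑((pW e).comp (S.comp (iW e))) = ⇑(pW e) ∘ (⇑S ∘ ⇑(iW e)) := by funext y; rfl
      rw [h3]; exact h2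
    have h2 : IsCompactOperator ⇑(c.smulRight w₀) := by
      have hcc : IsCompactOperator ⇑c := isCompactOperator_clm_real
      have h4 := hcc.clm_comp ((ContinuousLinearMap.id ℝ ℝ).smulRight w₀)
      have h3 : ⇑(c.smulRight w₀) = ⇑((ContinuousLinearMap.id ℝ ℝ).smulRight w₀) ∘ ⇑c := by
        funext y
        simp [ContinuousLinearMap.smulRight_apply]
      rw [h3]; exact h4
    have h3 : ⇑S₁ = ⇑((pW e).comp (S.comp (iW e))) + ⇑(c.smulRight w₀) := by
      funext y; rfl
    rw [h3]
    exact h1.add h2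
  have hval1 : g₁ (S₁ w₀) = g₀ (S ((iW e) w₀)) := by
    rw [hS₁app, map_add, map_smul, smul_eq_mul, hg₁w₀, mul_one]
    show g₀ ((iW e) ((pW e) (S ((iW e) w₀)))) + g₀ ((iZ e) ((pZ e) (S ((iW e) w₀)))) = g₀ (S ((iW e) w₀))
    rw [← map_add, hdecomp]
  have hattval : |g₁ (S₁ w₀)| = NumRadius S := by
    rw [hval1]; exact hg₀att
  have hNRS_nonneg : 0 ≤ NumRadius S := by
    rw [← hg₀att]; exact abs_nonneg _
  have hupper : NumRadius S₁ ≤ NumRadius S := by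
    apply numRadius_le _ hNRS_nonneg
    intro w φ hw hφ hφw
    set hY : X →L[ℝ] ℝ := φ.comp (pW e) + (φ w₀) • g₂.comp (pZ e) with hhYdef
    have hhYapp : ∀ y : X, hY y = φ ((pW e) y) + φ w₀ * g₂ ((pZ e) y) := fun y => rfl
    have hhYiW : ∀ v : W, hY ((iW e) v) = φ v := by
      intro v
      rw [hhYapp, hPI, hPZI, map_zero, mul_zero, add_zero]
    have hhYn : ‖hY‖ = 1 := by
      apply le_antisymm
      · apply ContinuousLinearMap.opNorm_le_bound _ zero_le_one
        intro y
        have h2 : |φ ((pW e) y)| ≤ ‖(pW e) y‖ := by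
          calc |φ ((pW e) y)| ≤ ‖φ‖ * ‖(pW e) y‖ := φ.le_opNorm _
            _ = ‖(pW e) y‖ := by rw [hφ, one_mul]
        have h3 : |φ w₀| ≤ 1 := by
          calc |φ w₀| ≤ ‖φ‖ * ‖w₀‖ := φ.le_opNorm _
            _ = 1 := by rw [hφ, hw₀1, mul_one]
        have h4 : |g₂ ((pZ e) y)| ≤ K * ‖(pZ e) y‖ := by
          calc |g₂ ((pZ e) y)| ≤ ‖g₂‖ * ‖(pZ e) y‖ := g₂.le_opNorm _
            _ ≤ K * ‖(pZ e) y‖ :=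
                mul_le_mul_of_nonneg_right (hg₂norm.trans hε'K.le) (norm_nonneg _)
        have h5 : ‖(pW e) y‖ + K * ‖(pZ e) y‖ ≤ ‖y‖ := by
          have h6 := hKle ‖(pW e) y‖ ‖(pZ e) y‖
          rw [abs_of_nonneg (norm_nonneg _), abs_of_nonneg (norm_nonneg _)] at h6
          rw [hNy y]
          exact h6
        have h7 : |hY y| ≤ |φ ((pW e) y)| + |φ w₀| * |g₂ ((pZ e) y)| := by
          rw [hhYapp]
          calc |φ ((pW e) y) + φ w₀ * g₂ ((pZ e) y)| ≤ |φ ((pW e) y)| + |φ w₀ * g₂ ((pZ e) y)| := abs_add_le _ _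
            _ = |φ ((pW e) y)| + |φ w₀| * |g₂ ((pZ e) y)| := by rw [abs_mul]
        have h8 : |φ w₀| * |g₂ ((pZ e) y)| ≤ K * ‖(pZ e) y‖ := by
          calc |φ w₀| * |g₂ ((pZ e) y)| ≤ 1 * |g₂ ((pZ e) y)| :=
                mul_le_mul_of_nonneg_right h3 (abs_nonneg _)
            _ = |g₂ ((pZ e) y)| := one_mul _
            _ ≤ K * ‖(pZ e) y‖ := h4
        calc ‖hY y‖ = |hY y| := rfl
          _ ≤ ‖(pW e) y‖ + K * ‖(pZ e) y‖ := by linarith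
          _ ≤ ‖y‖ := h5
          _ = 1 * ‖y‖ := (one_mul _).symm
      · have h1 : |hY ((iW e) w)| ≤ ‖hY‖ * ‖(iW e) w‖ := hY.le_opNorm _
        rw [hhYiW, hφw, nI, hw, mul_one] at h1
        simpa using h1
    have hmem : |hY (S ((iW e) w))| ≤ NumRadius S :=
      le_numRadius S (by rw [nI]; exact hw) hhYn (by rw [hhYiW]; exact hφw)
    have hvv : hY (S ((iW e) w)) = φ (S₁ w) := by
      rw [hhYapp, hS₁app, map_add, map_smul, smul_eq_mul]
      ring
    rw [← hvv]
    exact hmem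
  have hfinal : |g₁ (S₁ w₀)| = NumRadius S₁ := by
    refine le_antisymm (le_numRadius S₁ hw₀1 hg₁1 hg₁w₀) ?_
    rw [hattval]
    exact hupper
  have hdist : ‖S₁ - T‖ < ε := by
    set D := ‖S - (iW e).comp (T.comp (pW e))‖ with hD
    have hDnn : 0 ≤ D := norm_nonneg _
    have hb : ∀ w : W, ‖(S₁ - T) w‖ ≤ (2 * D) * ‖w‖ := by
      intro w
      have he1 : (pW e) ((S - (iW e).comp (T.comp (pW e))) ((iW e) w)) = (pW e) (S ((iW e) w)) - T w := by
        rw [ContinuousLinearMap.sub_apply, map_sub]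
        congr 1
        show (pW e) ((iW e) (T ((pW e) ((iW e) w)))) = T w
        rw [hPI, hPI]
      have he2 : (pZ e) ((S - (iW e).comp (T.comp (pW e))) ((iW e) w)) = (pZ e) (S ((iW e) w)) := by
        rw [ContinuousLinearMap.sub_apply, map_sub]
        have : (pZ e) (((iW e).comp (T.comp (pW e))) ((iW e) w)) = 0 := by
          show (pZ e) ((iW e) (T ((pW e) ((iW e) w)))) = 0
          rw [hPZI]
        rw [this, sub_zero]
      have he3 : (S₁ - T) w = (pW e) ((S - (iW e).comp (T.comp (pW e))) ((iW e) w)) +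
          g₂ ((pZ e) ((S - (iW e).comp (T.comp (pW e))) ((iW e) w))) • w₀ := by
        rw [he1, he2, ContinuousLinearMap.sub_apply, hS₁app]
        abel
      have hn1 : ‖(S - (iW e).comp (T.comp (pW e))) ((iW e) w)‖ ≤ D * ‖w‖ := by
        calc ‖(S - (iW e).comp (T.comp (pW e))) ((iW e) w)‖ ≤ D * ‖(iW e) w‖ :=
              (S - (iW e).comp (T.comp (pW e))).le_opNorm _
          _ = D * ‖w‖ := by rw [nI]
      have hg2y : |g₂ ((pZ e) ((S - (iW e).comp (T.comp (pW e))) ((iW e) w)))| ≤ D * ‖w‖ := by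
        calc |g₂ ((pZ e) ((S - (iW e).comp (T.comp (pW e))) ((iW e) w)))|
            ≤ ‖g₂‖ * ‖(pZ e) ((S - (iW e).comp (T.comp (pW e))) ((iW e) w))‖ := g₂.le_opNorm _
          _ ≤ 1 * (D * ‖w‖) := by
              apply mul_le_mul (hg₂norm.trans hε'1) ((nPZ _).trans hn1)
                (norm_nonneg _) zero_le_one
          _ = D * ‖w‖ := one_mul _
      have h9 : ‖(S₁ - T) w‖ ≤ ‖(pW e) ((S - (iW e).comp (T.comp (pW e))) ((iW e) w))‖ +
          ‖g₂ ((pZ e) ((S - (iW e).comp (T.comp (pW e))) ((iW e) w))) • w₀‖ := by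
        rw [he3]; exact norm_add_le _ _
      have h10 : ‖(pW e) ((S - (iW e).comp (T.comp (pW e))) ((iW e) w))‖ ≤ D * ‖w‖ :=
        (nP _).trans hn1
      have h11 : ‖g₂ ((pZ e) ((S - (iW e).comp (T.comp (pW e))) ((iW e) w))) • w₀‖ ≤ D * ‖w‖ := by
        rw [norm_smul, Real.norm_eq_abs, hw₀1, mul_one]
        exact hg2y
      calc ‖(S₁ - T) w‖ ≤ D * ‖w‖ + D * ‖w‖ := by linarith
        _ = (2 * D) * ‖w‖ := by ring
    have hb2 : ‖S₁ - T‖ ≤ 2 * D := by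
      apply ContinuousLinearMap.opNorm_le_bound _ (by positivity)
      exact hb
    calc ‖S₁ - T‖ ≤ 2 * D := hb2
      _ < 2 * ε' := by
          apply mul_lt_mul_of_pos_left hST
          norm_num
      _ ≤ ε := hε'ε
  exact ⟨S₁, w₀, g₁, hS₁c, hw₀1, hg₁1, hg₁w₀, hfinal,
    lt_trans hg₁f hε'ltε, lt_trans hw₀x hε'ltε, hdist⟩

set_option maxHeartbeats 2000000 in
lemma branch_infty (hN : IsAbsoluteNorm N) (e : X ≃L[ℝ] W × Z)
    (he : ∀ x : X, ‖x‖ = N ‖(e x).1‖ ‖(e x).2‖)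
    (h : HasWeakBPBnuCompact X)
    (b₀ : ℝ) (hb₀ : 0 < b₀) (hb₀1 : N 1 b₀ = 1) :
    HasWeakBPBnuCompact W := by
  have hIA : ∀ w : W, (iW e) w = e.symm (w, 0) := iW_app e
  have hIZA : ∀ z : Z, (iZ e) z = e.symm (0, z) := iZ_app e
  have hPA : ∀ y : X, (pW e) y = (e y).1 := pW_app e
  have hPZA : ∀ y : X, (pZ e) y = (e y).2 := pZ_app e
  have hPI : ∀ w : W, (pW e) ((iW e) w) = w := pW_iW e
  have hPZI : ∀ w : W, (pZ e) ((iW e) w) = 0 := pZ_iW e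
  have hPIZ : ∀ z : Z, (pW e) ((iZ e) z) = 0 := pW_iZ e
  have hPZIZ : ∀ z : Z, (pZ e) ((iZ e) z) = z := pZ_iZ e
  have hpair : ∀ (w : W) (z : Z), (iW e) w + (iZ e) z = e.symm (w, z) := pair_add e
  have hdecomp : ∀ y : X, (iW e) ((pW e) y) + (iZ e) ((pZ e) y) = y := decomp_eq e
  have hnorm : ∀ (w : W) (z : Z), ‖e.symm (w, z)‖ = N ‖w‖ ‖z‖ := norm_symm e he
  have nI : ∀ w : W, ‖(iW e) w‖ = ‖w‖ := norm_iW hN e he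
  have nIZ : ∀ z : Z, ‖(iZ e) z‖ = ‖z‖ := norm_iZ hN e he
  have nP : ∀ y : X, ‖(pW e) y‖ ≤ ‖y‖ := norm_pW_le hN e he
  have nPZ : ∀ y : X, ‖(pZ e) y‖ ≤ ‖y‖ := norm_pZ_le hN e he
  have hNy : ∀ y : X, ‖y‖ = N ‖(pW e) y‖ ‖(pZ e) y‖ := norm_eq_N e he
  have key := key_lemma hN e he h
  have g₀ι_norm := g0_iW_norm hN e he
  intro ε hε
  have hb₀le1 : b₀ ≤ 1 := by
    have h1 := hN.abs_right_le 1 b₀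
    rw [hb₀1, abs_of_pos hb₀] at h1
    exact h1
  set ε' := min ε b₀ / 2 with hε'def
  have hε'pos : 0 < ε' := by
    apply div_pos (lt_min hε hb₀)
    norm_num
  have hε'b : ε' < b₀ := by
    rw [hε'def]
    have := min_le_right ε b₀
    linarith
  have hε'1 : ε' ≤ 1 := by
    rw [hε'def]
    have := min_le_right ε b₀
    linarith
  have hε'ε : ε' < ε := by
    rw [hε'def]
    have := min_le_left ε b₀
    linarith
  obtain ⟨η, hη, hkey⟩ := key ε' hε'pos
  refine ⟨η, hη, ?_⟩
  intro T x f hTc hvT hx hf hfx hclose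
  obtain ⟨S, w₀, z₀, g₀, hSc, hST, hg₀n, hw₀x, hz₀, hg₁f, hg₂n, hw₀n, hNw₀, hg₀1, hg₀att⟩ :=
    hkey T x f hTc hvT hx hf hfx hclose
  set g₁ := g₀.comp (iW e) with hg₁def
  set g₂ := g₀.comp (iZ e) with hg₂def
  have hg₁norm : ‖g₁‖ ≤ 1 := g₀ι_norm g₀ hg₀n
  have hg₂norm : ‖g₂‖ ≤ ε' := hg₂n.le
  have hsum : g₁ w₀ + g₂ z₀ = 1 := by
    show g₀ ((iW e) w₀) + g₀ ((iZ e) z₀) = 1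
    rw [← map_add, hpair]
    exact hg₀1
  have hflat : ∀ c : ℝ, 0 ≤ c → c ≤ b₀ → N 1 c = 1 := by
    intro c hc0 hcb
    apply le_antisymm
    · calc N 1 c ≤ N 1 b₀ := hN.mono_right 1 hc0 hcb
        _ = 1 := hb₀1
    · calc (1:ℝ) = N 1 0 := hN.one_zero.symm
        _ ≤ N 1 c := hN.mono_right 1 le_rfl hc0
  -- duality estimate: ‖g₁‖ + b₀‖g₂‖ ≤ 1
  have step1 : ∀ (w : W) (z : Z), ‖w‖ ≤ 1 → ‖z‖ ≤ 1 → g₁ w + b₀ * g₂ z ≤ 1 := by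
    intro w z hwle hzle
    have hz' : g₂ (b₀ • z) = b₀ * g₂ z := by rw [map_smul, smul_eq_mul]
    have hgz : g₁ w + b₀ * g₂ z = g₀ (e.symm (w, b₀ • z)) := by
      rw [← hpair, map_add, ← hz']
      rfl
    have hzn : ‖b₀ • z‖ ≤ b₀ := by
      rw [norm_smul, Real.norm_eq_abs, abs_of_pos hb₀]
      calc b₀ * ‖z‖ ≤ b₀ * 1 := mul_le_mul_of_nonneg_left hzle hb₀.le
        _ = b₀ := mul_one _
    calc g₁ w + b₀ * g₂ z = g₀ (e.symm (w, b₀ • z)) := hgz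
      _ ≤ |g₀ (e.symm (w, b₀ • z))| := le_abs_self _
      _ ≤ ‖g₀‖ * ‖e.symm (w, b₀ • z)‖ := g₀.le_opNorm _
      _ = N ‖w‖ ‖b₀ • z‖ := by rw [hg₀n, one_mul, hnorm]
      _ ≤ N 1 b₀ := hN.mono (norm_nonneg _) hwle (norm_nonneg _) hzn
      _ = 1 := hb₀1
  have step2 : ∀ z : Z, ‖z‖ ≤ 1 → ‖g₁‖ ≤ 1 - b₀ * g₂ z := by
    intro z hzle
    have hg₂1 : ‖g₂‖ ≤ 1 := hg₂norm.trans hε'1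
    have hgz1 : |g₂ z| ≤ 1 := by
      calc |g₂ z| ≤ ‖g₂‖ * ‖z‖ := g₂.le_opNorm _
        _ ≤ 1 * 1 := mul_le_mul hg₂1 hzle (norm_nonneg _) zero_le_one
        _ = 1 := one_mul _
    have hnn : 0 ≤ 1 - b₀ * g₂ z := by
      have h1 : g₂ z ≤ |g₂ z| := le_abs_self _
      nlinarith
    apply ContinuousLinearMap.opNorm_le_bound _ hnn
    intro w
    by_cases hw0 : w = 0
    · simp [hw0]
    · have hwn : 0 < ‖w‖ := norm_pos_iff.2 hw0
      have hnu1 : ‖(‖w‖⁻¹ : ℝ) • w‖ ≤ 1 := by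
        rw [norm_smul, Real.norm_eq_abs, abs_of_pos (inv_pos.2 hwn),
          inv_mul_cancel₀ hwn.ne']
      have hnu2 : ‖(-(‖w‖⁻¹) : ℝ) • w‖ ≤ 1 := by
        rw [norm_smul, Real.norm_eq_abs, abs_neg, abs_of_pos (inv_pos.2 hwn),
          inv_mul_cancel₀ hwn.ne']
      have c1 := step1 ((‖w‖⁻¹ : ℝ) • w) z hnu1 hzle
      have c2 := step1 ((-(‖w‖⁻¹) : ℝ) • w) z hnu2 hzle
      rw [map_smul, smul_eq_mul] at c1 c2
      rw [Real.norm_eq_abs]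
      rcases abs_cases (g₁ w) with ⟨hh, _⟩ | ⟨hh, _⟩ <;> rw [hh]
      · nlinarith [mul_inv_cancel₀ hwn.ne']
      · nlinarith [mul_inv_cancel₀ hwn.ne']
  have hdual : ‖g₁‖ + b₀ * ‖g₂‖ ≤ 1 := by
    have hnn : 0 ≤ 1 - ‖g₁‖ := by linarith
    have hb : ‖b₀ • g₂‖ ≤ 1 - ‖g₁‖ := by
      apply ContinuousLinearMap.opNorm_le_bound _ hnn
      intro z
      by_cases hz0 : z = 0
      · simp [hz0]
      · have hzn : 0 < ‖z‖ := norm_pos_iff.2 hz0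
        have hnu1 : ‖(‖z‖⁻¹ : ℝ) • z‖ ≤ 1 := by
          rw [norm_smul, Real.norm_eq_abs, abs_of_pos (inv_pos.2 hzn),
            inv_mul_cancel₀ hzn.ne']
        have hnu2 : ‖(-(‖z‖⁻¹) : ℝ) • z‖ ≤ 1 := by
          rw [norm_smul, Real.norm_eq_abs, abs_neg, abs_of_pos (inv_pos.2 hzn),
            inv_mul_cancel₀ hzn.ne']
        have c1 := step2 ((‖z‖⁻¹ : ℝ) • z) hnu1
        have c2 := step2 ((-(‖z‖⁻¹) : ℝ) • z) hnu2
        rw [map_smul, smul_eq_mul] at c1 c2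
        have happ : (b₀ • g₂) z = b₀ * g₂ z := by
          rw [ContinuousLinearMap.smul_apply, smul_eq_mul]
        rw [Real.norm_eq_abs, happ, abs_mul, abs_of_pos hb₀]
        rcases abs_cases (g₂ z) with ⟨hh, _⟩ | ⟨hh, _⟩ <;> rw [hh]
        · have c1' : b₀ * (‖z‖⁻¹ * g₂ z) ≤ 1 - ‖g₁‖ := by linarith
          calc b₀ * g₂ z = ‖z‖ * (b₀ * (‖z‖⁻¹ * g₂ z)) := by field_simp
            _ ≤ ‖z‖ * (1 - ‖g₁‖) := mul_le_mul_of_nonneg_left c1' hzn.le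
            _ = (1 - ‖g₁‖) * ‖z‖ := mul_comm _ _
        · have c2' : b₀ * (-(‖z‖⁻¹) * g₂ z) ≤ 1 - ‖g₁‖ := by linarith
          calc b₀ * -g₂ z = ‖z‖ * (b₀ * (-(‖z‖⁻¹) * g₂ z)) := by field_simp
            _ ≤ ‖z‖ * (1 - ‖g₁‖) := mul_le_mul_of_nonneg_left c2' hzn.le
            _ = (1 - ‖g₁‖) * ‖z‖ := mul_comm _ _
    rw [norm_smul b₀ g₂, Real.norm_eq_abs, abs_of_pos hb₀] at hb
    linarith
  -- g₂ vanishes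
  have hg₂0 : ‖g₂‖ = 0 := by
    have ha : g₁ w₀ ≤ ‖g₁‖ := by
      calc g₁ w₀ ≤ |g₁ w₀| := le_abs_self _
        _ ≤ ‖g₁‖ * ‖w₀‖ := g₁.le_opNorm _
        _ ≤ ‖g₁‖ * 1 := mul_le_mul_of_nonneg_left hw₀n (norm_nonneg _)
        _ = ‖g₁‖ := mul_one _
    have hbz : g₂ z₀ ≤ ‖g₂‖ * ε' := by
      calc g₂ z₀ ≤ |g₂ z₀| := le_abs_self _
        _ ≤ ‖g₂‖ * ‖z₀‖ := g₂.le_opNorm _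
        _ ≤ ‖g₂‖ * ε' := mul_le_mul_of_nonneg_left hz₀.le (norm_nonneg _)
    have hle : ‖g₂‖ ≤ 0 := by nlinarith [norm_nonneg g₂]
    exact le_antisymm hle (norm_nonneg _)
  have hg₂zero : ∀ z' : Z, g₂ z' = 0 := by
    intro z'
    have h1 : |g₂ z'| ≤ ‖g₂‖ * ‖z'‖ := g₂.le_opNorm _
    rw [hg₂0, zero_mul] at h1
    exact abs_eq_zero.1 (le_antisymm h1 (abs_nonneg _))
  have hg₁w₀ : g₁ w₀ = 1 := by
    rw [hg₂zero z₀, add_zero] at hsum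
    exact hsum
  have hw₀1 : ‖w₀‖ = 1 := by
    refine le_antisymm hw₀n ?_
    have h1 : (1:ℝ) ≤ ‖g₁‖ * ‖w₀‖ := by
      calc (1:ℝ) = g₁ w₀ := hg₁w₀.symm
        _ ≤ |g₁ w₀| := le_abs_self _
        _ ≤ ‖g₁‖ * ‖w₀‖ := g₁.le_opNorm _
    nlinarith [norm_nonneg w₀]
  have hg₁1 : ‖g₁‖ = 1 := by
    refine le_antisymm hg₁norm ?_
    have h1 : (1:ℝ) ≤ ‖g₁‖ * ‖w₀‖ := by
      calc (1:ℝ) = g₁ w₀ := hg₁w₀.symm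
        _ ≤ |g₁ w₀| := le_abs_self _
        _ ≤ ‖g₁‖ * ‖w₀‖ := g₁.le_opNorm _
    rw [hw₀1, mul_one] at h1
    exact h1
  -- the weighted embedding of W into X
  set j : W →L[ℝ] X := (iW e) + (iZ e).comp (g₁.smulRight z₀) with hjdef
  have hjapp : ∀ w, j w = (iW e) w + (iZ e) (g₁ w • z₀) := fun w => rfl
  have hjsymm : ∀ w, j w = e.symm (w, g₁ w • z₀) := by
    intro w
    rw [hjapp]
    exact hpair w _
  have hjw₀ : j w₀ = e.symm (w₀, z₀) := by
    rw [hjsymm, hg₁w₀, one_smul]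
  have hz₀b : ‖z₀‖ ≤ b₀ := hz₀.le.trans hε'b.le
  have hjnorm : ∀ w, ‖j w‖ ≤ ‖w‖ := by
    intro w
    rw [hjsymm, hnorm, norm_smul, Real.norm_eq_abs]
    have h1 : |g₁ w| * ‖z₀‖ ≤ ‖w‖ * b₀ := by
      apply mul_le_mul _ hz₀b (norm_nonneg _) (norm_nonneg _)
      calc |g₁ w| ≤ ‖g₁‖ * ‖w‖ := g₁.le_opNorm _
        _ = ‖w‖ := by rw [hg₁1, one_mul]
    calc N ‖w‖ (|g₁ w| * ‖z₀‖) ≤ N ‖w‖ (‖w‖ * b₀) :=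
          hN.mono_right _ (mul_nonneg (abs_nonneg _) (norm_nonneg _)) h1
      _ = ‖w‖ * N 1 b₀ := by
          have h2 := hN.smul ‖w‖ 1 b₀
          rw [abs_of_nonneg (norm_nonneg _), mul_one] at h2
          exact h2
      _ = ‖w‖ := by rw [hb₀1, mul_one]
  have hjnorm1 : ∀ w, ‖w‖ = 1 → ‖j w‖ = 1 := by
    intro w hw
    rw [hjsymm, hnorm, norm_smul, Real.norm_eq_abs, hw]
    apply hflat
    · positivity
    · have h1 : |g₁ w| ≤ 1 := by
        calc |g₁ w| ≤ ‖g₁‖ * ‖w‖ := g₁.le_opNorm _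
          _ = 1 := by rw [hg₁1, hw, mul_one]
      calc |g₁ w| * ‖z₀‖ ≤ 1 * b₀ :=
            mul_le_mul h1 hz₀b (norm_nonneg _) zero_le_one
        _ = b₀ := one_mul _
  have hPj : ∀ w, (pW e) (j w) = w := by
    intro w
    rw [hjsymm, hPA, e.apply_symm_apply]
  set S₁ : W →L[ℝ] W := (pW e).comp (S.comp j) with hS₁def
  have hS₁app : ∀ w, S₁ w = (pW e) (S (j w)) := fun w => rfl
  have hS₁c : IsCompactOperator ⇑S₁ := by
    have h2 := (hSc.comp_clm j).clm_comp (pW e)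
    have h3 : ⇑S₁ = ⇑(pW e) ∘ (⇑S ∘ ⇑j) := by funext y; rfl
    rw [h3]
    exact h2
  have hgdec : ∀ y : X, g₀ y = g₁ ((pW e) y) := by
    intro y
    calc g₀ y = g₀ ((iW e) ((pW e) y) + (iZ e) ((pZ e) y)) := by rw [hdecomp]
      _ = g₀ ((iW e) ((pW e) y)) + g₀ ((iZ e) ((pZ e) y)) := map_add _ _ _
      _ = g₁ ((pW e) y) := by
          rw [show g₀ ((iZ e) ((pZ e) y)) = g₂ ((pZ e) y) from rfl, hg₂zero, add_zero]
          rfl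
  rw [← hjw₀] at hg₀att
  have hval1 : g₁ (S₁ w₀) = g₀ (S (j w₀)) := by
    rw [hS₁app, ← hgdec]
  have hattval : |g₁ (S₁ w₀)| = NumRadius S := by
    rw [hval1]
    exact hg₀att
  have hNRS_nonneg : 0 ≤ NumRadius S := by
    rw [← hattval]
    exact abs_nonneg _
  have hupper : NumRadius S₁ ≤ NumRadius S := by
    apply numRadius_le _ hNRS_nonneg
    intro w φ hw hφ hφw
    set hY : X →L[ℝ] ℝ := φ.comp (pW e) with hYdef
    have hYj : hY (j w) = φ w := by
      show φ ((pW e) (j w)) = φ w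
      rw [hPj]
    have hYn : ‖hY‖ = 1 := by
      apply le_antisymm
      · apply ContinuousLinearMap.opNorm_le_bound _ zero_le_one
        intro y
        calc ‖hY y‖ = |φ ((pW e) y)| := rfl
          _ ≤ ‖φ‖ * ‖(pW e) y‖ := φ.le_opNorm _
          _ ≤ 1 * ‖y‖ := by
              rw [hφ, one_mul, one_mul]
              exact nP y
      · have h1 : |hY (j w)| ≤ ‖hY‖ * ‖j w‖ := hY.le_opNorm _
        rw [hYj, hφw, hjnorm1 w hw, mul_one] at h1
        simpa using h1
    have hmem : |hY (S (j w))| ≤ NumRadius S :=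
      le_numRadius S (hjnorm1 w hw) hYn (by rw [hYj]; exact hφw)
    have hvv : hY (S (j w)) = φ (S₁ w) := rfl
    rw [← hvv]
    exact hmem
  have hfinal : |g₁ (S₁ w₀)| = NumRadius S₁ := by
    refine le_antisymm (le_numRadius S₁ hw₀1 hg₁1 hg₁w₀) ?_
    rw [hattval]
    exact hupper
  have hdist : ‖S₁ - T‖ < ε := by
    have hb : ∀ w : W, ‖(S₁ - T) w‖ ≤ ‖S - (iW e).comp (T.comp (pW e))‖ * ‖w‖ := by
      intro w
      have he1 : (S₁ - T) w = (pW e) ((S - (iW e).comp (T.comp (pW e))) (j w)) := by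
        rw [ContinuousLinearMap.sub_apply, ContinuousLinearMap.sub_apply, map_sub]
        congr 1
        show T w = (pW e) ((iW e) (T ((pW e) (j w))))
        rw [hPI, hPj]
      rw [he1]
      calc ‖(pW e) ((S - (iW e).comp (T.comp (pW e))) (j w))‖
          ≤ ‖(S - (iW e).comp (T.comp (pW e))) (j w)‖ := nP _
        _ ≤ ‖S - (iW e).comp (T.comp (pW e))‖ * ‖j w‖ := (S - (iW e).comp (T.comp (pW e))).le_opNorm _
        _ ≤ ‖S - (iW e).comp (T.comp (pW e))‖ * ‖w‖ :=
            mul_le_mul_of_nonneg_left (hjnorm w) (norm_nonneg _)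
    have hb2 : ‖S₁ - T‖ ≤ ‖S - (iW e).comp (T.comp (pW e))‖ :=
      ContinuousLinearMap.opNorm_le_bound _ (norm_nonneg _) hb
    calc ‖S₁ - T‖ ≤ ‖S - (iW e).comp (T.comp (pW e))‖ := hb2
      _ < ε' := hST
      _ < ε := hε'ε
  exact ⟨S₁, w₀, g₁, hS₁c, hw₀1, hg₁1, hg₁w₀, hfinal,
    lt_trans hg₁f hε'ε, lt_trans hw₀x hε'ε, hdist⟩

end AuxWBPB

theorem weak_bpbnu_compact_absolute_summand (W Z X : Type*)
    [NormedAddCommGroup W] [NormedSpace ℝ W] [CompleteSpace W]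
    [NormedAddCommGroup Z] [NormedSpace ℝ Z] [CompleteSpace Z]
    [NormedAddCommGroup X] [NormedSpace ℝ X] [CompleteSpace X]
    (N : ℝ → ℝ → ℝ) (hN : IsAbsoluteNorm N)
    (e : X ≃L[ℝ] W × Z) (he : ∀ x : X, ‖x‖ = N ‖(e x).1‖ ‖(e x).2‖)
    (htype : AbsNormTypeOne N ∨ AbsNormTypeInfty N)
    (h : HasWeakBPBnuCompact X) : HasWeakBPBnuCompact W := by
  rcases htype with ⟨K, hK, hKle⟩ | ⟨b₀, hb₀, hb₀1⟩
  · exact branch_one hN e he h K hK hKle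
  · exact branch_infty hN e he h b₀ hb₀ hb₀1
end

section
/- Let W and Z be real Banach spaces, let N be an absolute norm and let W ⊕_a Z be the corresponding absolute sum, whose dual space is W* ⊕_{a*} Z* with the dual absolute norm acting by ⟨(w,z),(w*,z*)⟩ = w*(w) + z*(z). If (w,z) ∈ W ⊕_a Z and (w*,z*) ∈ W* ⊕_{a*} Z* satisfy ‖(w,z)‖_a = 1, ‖(w*,z*)‖_{a*} = 1 and w*(w) + z*(z) = 1, then w*(w) = ‖w*‖·‖w‖ and z*(z) = ‖z*‖·‖z‖. -/
open Filter Topology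

lemma IsAbsoluteNorm.neg_left_s19 {N : ℝ → ℝ → ℝ} (hN : IsAbsoluteNorm N) (s t : ℝ) :
    N (-s) t = N s t := by
  rw [hN.abs_eq (-s) t, abs_neg, ← hN.abs_eq]

lemma IsAbsoluteNorm.neg_right_s19 {N : ℝ → ℝ → ℝ} (hN : IsAbsoluteNorm N) (s t : ℝ) :
    N s (-t) = N s t := by
  rw [hN.abs_eq s (-t), abs_neg, ← hN.abs_eq]

lemma IsAbsoluteNorm.mono_left_s19 {N : ℝ → ℝ → ℝ} (hN : IsAbsoluteNorm N)
    {s' s : ℝ} (t : ℝ) (h0 : 0 ≤ s') (h : s' ≤ s) : N s' t ≤ N s t := by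
  rcases eq_or_lt_of_le (h0.trans h) with hs | hs
  · obtain rfl : s = 0 := hs.symm
    obtain rfl : s' = 0 := le_antisymm h h0
    exact le_refl _
  set a := (s + s') / (2 * s) with ha
  set b := (s - s') / (2 * s) with hb
  have hs0 : (2:ℝ) * s ≠ 0 := ne_of_gt (by linarith)
  have ha0 : 0 ≤ a := div_nonneg (by linarith) (by linarith)
  have hb0 : 0 ≤ b := div_nonneg (by linarith) (by linarith)
  have hab : a + b = 1 := by rw [ha, hb]; field_simp; ring
  have h1 : a * s + b * (-s) = s' := by
    rw [ha, hb, div_mul_eq_mul_div, div_mul_eq_mul_div, ← add_div,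
        show (s + s') * s + (s - s') * (-s) = s' * (2 * s) by ring,
        mul_div_assoc, div_self hs0, mul_one]
  have h2 : a * t + b * t = t := by rw [← add_mul, hab, one_mul]
  calc N s' t = N (a * s + b * (-s)) (a * t + b * t) := by rw [h1, h2]
    _ ≤ N (a * s) (a * t) + N (b * (-s)) (b * t) := hN.triangle _ _ _ _
    _ = a * N s t + b * N (-s) t := by
        rw [hN.smul, hN.smul, abs_of_nonneg ha0, abs_of_nonneg hb0]
    _ = (a + b) * N s t := by rw [hN.neg_left_s19]; ring
    _ = N s t := by rw [hab, one_mul]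

lemma IsAbsoluteNorm.mono_right_s19 {N : ℝ → ℝ → ℝ} (hN : IsAbsoluteNorm N)
    (s : ℝ) {t' t : ℝ} (h0 : 0 ≤ t') (h : t' ≤ t) : N s t' ≤ N s t := by
  rcases eq_or_lt_of_le (h0.trans h) with ht | ht
  · obtain rfl : t = 0 := ht.symm
    obtain rfl : t' = 0 := le_antisymm h h0
    exact le_refl _
  set a := (t + t') / (2 * t) with ha
  set b := (t - t') / (2 * t) with hb
  have ht0 : (2:ℝ) * t ≠ 0 := ne_of_gt (by linarith)
  have ha0 : 0 ≤ a := div_nonneg (by linarith) (by linarith)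
  have hb0 : 0 ≤ b := div_nonneg (by linarith) (by linarith)
  have hab : a + b = 1 := by rw [ha, hb]; field_simp; ring
  have h1 : a * t + b * (-t) = t' := by
    rw [ha, hb, div_mul_eq_mul_div, div_mul_eq_mul_div, ← add_div,
        show (t + t') * t + (t - t') * (-t) = t' * (2 * t) by ring,
        mul_div_assoc, div_self ht0, mul_one]
  have h2 : a * s + b * s = s := by rw [← add_mul, hab, one_mul]
  calc N s t' = N (a * s + b * s) (a * t + b * (-t)) := by rw [h1, h2]
    _ ≤ N (a * s) (a * t) + N (b * s) (b * (-t)) := hN.triangle _ _ _ _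
    _ = a * N s t + b * N s (-t) := by
        rw [hN.smul, hN.smul, abs_of_nonneg ha0, abs_of_nonneg hb0]
    _ = (a + b) * N s t := by rw [hN.neg_right_s19]; ring
    _ = N s t := by rw [hab, one_mul]

/-- For any `ε > 0` there is `u` with `‖u‖ ≤ 1` and `‖f‖ - ε ≤ f u`. -/
lemma exists_near_norming {E : Type*} [NormedAddCommGroup E] [NormedSpace ℝ E]
    (f : E →L[ℝ] ℝ) {ε : ℝ} (hε : 0 < ε) : ∃ u : E, ‖u‖ ≤ 1 ∧ ‖f‖ - ε ≤ f u := by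
  by_cases h : ‖f‖ ≤ ε
  · exact ⟨0, by simp, by simp; linarith⟩
  · obtain ⟨x, hx1, hx2⟩ := f.exists_lt_apply_of_lt_opNorm (r := ‖f‖ - ε) (by linarith)
    rcases le_total 0 (f x) with hfx | hfx
    · refine ⟨x, hx1.le, ?_⟩
      rw [Real.norm_eq_abs, abs_of_nonneg hfx] at hx2
      linarith
    · refine ⟨-x, by simpa using hx1.le, ?_⟩
      rw [Real.norm_eq_abs, abs_of_nonpos hfx] at hx2
      simp only [map_neg]
      linarith

set_option maxHeartbeats 1000000 in
theorem absolute_sum_duality_lemma (W Z X : Type*)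
    [NormedAddCommGroup W] [NormedSpace ℝ W] [CompleteSpace W]
    [NormedAddCommGroup Z] [NormedSpace ℝ Z] [CompleteSpace Z]
    [NormedAddCommGroup X] [NormedSpace ℝ X] [CompleteSpace X]
    (N : ℝ → ℝ → ℝ) (hN : IsAbsoluteNorm N)
    (e : X ≃L[ℝ] W × Z) (he : ∀ x : X, ‖x‖ = N ‖(e x).1‖ ‖(e x).2‖)
    (w : W) (z : Z) (f : W →L[ℝ] ℝ) (g : Z →L[ℝ] ℝ)
    (hwz : N ‖w‖ ‖z‖ = 1)
    (hfg : ‖(f.comp (ContinuousLinearMap.fst ℝ W Z) +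
        g.comp (ContinuousLinearMap.snd ℝ W Z)).comp (e : X →L[ℝ] W × Z)‖ = 1)
    (hsum : f w + g z = 1) :
    f w = ‖f‖ * ‖w‖ ∧ g z = ‖g‖ * ‖z‖ := by
  have key : ‖f‖ * ‖w‖ + ‖g‖ * ‖z‖ ≤ 1 := by
    refine le_of_forall_pos_le_add fun ε hε => ?_
    have hden : 0 < ‖w‖ + ‖z‖ + 1 := by positivity
    have hε'0 : 0 < ε / (‖w‖ + ‖z‖ + 1) := div_pos hε hden
    obtain ⟨u, hu1, hu2⟩ := exists_near_norming f hε'0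
    obtain ⟨v, hv1, hv2⟩ := exists_near_norming g hε'0
    set F := (f.comp (ContinuousLinearMap.fst ℝ W Z) +
        g.comp (ContinuousLinearMap.snd ℝ W Z)).comp (e : X →L[ℝ] W × Z) with hF
    set ε' := ε / (‖w‖ + ‖z‖ + 1) with hε'
    have hFp : F (e.symm (‖w‖ • u, ‖z‖ • v)) = ‖w‖ * f u + ‖z‖ * g v := by
      simp [hF]
    have hnorm : ‖e.symm ((‖w‖ • u, ‖z‖ • v) : W × Z)‖ ≤ 1 := by
      rw [he (e.symm (‖w‖ • u, ‖z‖ • v)), e.apply_symm_apply]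
      have h1 : ‖(((‖w‖ • u, ‖z‖ • v) : W × Z)).1‖ ≤ ‖w‖ := by
        simp only [norm_smul, Real.norm_eq_abs, abs_of_nonneg (norm_nonneg w)]
        calc ‖w‖ * ‖u‖ ≤ ‖w‖ * 1 := mul_le_mul_of_nonneg_left hu1 (norm_nonneg w)
          _ = ‖w‖ := mul_one _
      have h2 : ‖(((‖w‖ • u, ‖z‖ • v) : W × Z)).2‖ ≤ ‖z‖ := by
        simp only [norm_smul, Real.norm_eq_abs, abs_of_nonneg (norm_nonneg z)]
        calc ‖z‖ * ‖v‖ ≤ ‖z‖ * 1 := mul_le_mul_of_nonneg_left hv1 (norm_nonneg z)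
          _ = ‖z‖ := mul_one _
      calc N ‖(((‖w‖ • u, ‖z‖ • v) : W × Z)).1‖ ‖(((‖w‖ • u, ‖z‖ • v) : W × Z)).2‖
          ≤ N ‖w‖ ‖(((‖w‖ • u, ‖z‖ • v) : W × Z)).2‖ := hN.mono_left_s19 _ (norm_nonneg _) h1
        _ ≤ N ‖w‖ ‖z‖ := hN.mono_right_s19 _ (norm_nonneg _) h2
        _ = 1 := hwz
    have hFle : ‖w‖ * f u + ‖z‖ * g v ≤ 1 := by
      rw [← hFp]
      calc F (e.symm (‖w‖ • u, ‖z‖ • v)) ≤ |F (e.symm (‖w‖ • u, ‖z‖ • v))| := le_abs_self _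
        _ = ‖F (e.symm (‖w‖ • u, ‖z‖ • v))‖ := (Real.norm_eq_abs _).symm
        _ ≤ ‖F‖ * ‖e.symm ((‖w‖ • u, ‖z‖ • v) : W × Z)‖ := F.le_opNorm _
        _ ≤ 1 * 1 := mul_le_mul (le_of_eq hfg) hnorm (norm_nonneg _) zero_le_one
        _ = 1 := one_mul 1
    have hmu : ‖f‖ * ‖w‖ ≤ ‖w‖ * f u + ε' * ‖w‖ := by
      have h := mul_le_mul_of_nonneg_right hu2 (norm_nonneg w)
      rw [sub_mul] at h
      linarith [h, mul_comm (f u) ‖w‖]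
    have hmv : ‖g‖ * ‖z‖ ≤ ‖z‖ * g v + ε' * ‖z‖ := by
      have h := mul_le_mul_of_nonneg_right hv2 (norm_nonneg z)
      rw [sub_mul] at h
      linarith [h, mul_comm (g v) ‖z‖]
    have hεbound : ε' * ‖w‖ + ε' * ‖z‖ ≤ ε := by
      have heq : ε' * ‖w‖ + ε' * ‖z‖ + ε' = ε := by
        rw [hε']; field_simp
      linarith [hε'0.le]
    linarith
  have hfw : f w ≤ ‖f‖ * ‖w‖ :=
    (le_abs_self _).trans ((Real.norm_eq_abs (f w)) ▸ f.le_opNorm w)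
  have hgz : g z ≤ ‖g‖ * ‖z‖ :=
    (le_abs_self _).trans ((Real.norm_eq_abs (g z)) ▸ g.le_opNorm z)
  constructor <;> linarith
end
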